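/- Let G be a tripartite graph with parts A, B, C, let κ = κ₃(G) be its triangle density, and suppose every edge between A and B lies in at least τ|C| triangles, where τ > 0. Let C₀ ⊆ C be the set of vertices c ∈ C lying in at most (κ/4)|A||B| triangles. Then |C \ C₀| ≥ (3τ/4)|C|. -/

import Mathlib

open Finset

/-- The number of edges of the relation `G` between the finsets `X` and `Y`. -/
def bipE {V : Type*} [DecidableEq V] (G : V → V → Prop) [DecidableRel G]
    (X Y : Finset V) : ℕ :=
  ((X ×ˢ Y).filter fun p => G p.1 p.2).card

/-- The edge density of the relation `G` between the finsets `X` and `Y`. -/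
noncomputable def bipD {V : Type*} [DecidableEq V] (G : V → V → Prop) [DecidableRel G]
    (X Y : Finset V) : ℝ :=
  (bipE G X Y : ℝ) / ((X.card : ℝ) * (Y.card : ℝ))

/-- The number of triangles of `G` with one vertex in each of `A`, `B`, `C`. -/
def triCount {V : Type*} [DecidableEq V] (G : V → V → Prop) [DecidableRel G]
    (A B C : Finset V) : ℕ :=
  ((A ×ˢ B ×ˢ C).filter fun p => G p.1 p.2.1 ∧ G p.1 p.2.2 ∧ G p.2.1 p.2.2).card

/-- The number of triangles of `G` (with `A`-vertex and `B`-vertex) through a fixed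
vertex `c`. -/
def triThrough {V : Type*} [DecidableEq V] (G : V → V → Prop) [DecidableRel G]
    (A B : Finset V) (c : V) : ℕ :=
  ((A ×ˢ B).filter fun p => G p.1 p.2 ∧ G p.1 c ∧ G p.2 c).card

lemma tri_sum {V : Type*} [DecidableEq V] (G : V → V → Prop) [DecidableRel G]
    (A B C : Finset V) : triCount G A B C = ∑ c ∈ C, triThrough G A B c := by
  classical
  unfold triCount triThrough
  simp only [Finset.card_filter, Finset.sum_product]
  rw [show (∑ a ∈ A, ∑ b ∈ B, ∑ c ∈ C, if G a b ∧ G a c ∧ G b c then 1 else 0)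
      = ∑ a ∈ A, ∑ c ∈ C, ∑ b ∈ B, if G a b ∧ G a c ∧ G b c then 1 else 0 from
    Finset.sum_congr rfl fun a _ => Finset.sum_comm, Finset.sum_comm]

lemma tri_edge_sum {V : Type*} [DecidableEq V] (G : V → V → Prop) [DecidableRel G]
    (A B C : Finset V) : triCount G A B C =
      ∑ p ∈ (A ×ˢ B).filter (fun p => G p.1 p.2),
        (C.filter fun c => G p.1 c ∧ G p.2 c).card := by
  classical
  unfold triCount
  rw [Finset.sum_filter]
  simp only [Finset.card_filter, Finset.sum_product]
  refine Finset.sum_congr rfl fun a ha => Finset.sum_congr rfl fun b hb => ?_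
  by_cases hab : G a b <;> simp [hab]

lemma triThrough_le_bipE {V : Type*} [DecidableEq V] (G : V → V → Prop) [DecidableRel G]
    (A B : Finset V) (c : V) : triThrough G A B c ≤ bipE G A B := by
  apply Finset.card_le_card
  intro p hp
  simp only [Finset.mem_filter] at *
  tauto

open scoped Classical in
theorem heavy_vertices_lower_bound {V : Type*} [DecidableEq V]
    (G : V → V → Prop) [DecidableRel G] (A B C : Finset V) (τ : ℝ)
    (hτ0 : 0 < τ) (he : 1 ≤ bipE G A B)
    (hext : ∀ a ∈ A, ∀ b ∈ B, G a b →
      τ * (C.card : ℝ) ≤ ((C.filter fun c => G a c ∧ G b c).card : ℝ)) :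
    (3 * τ / 4) * (C.card : ℝ) ≤
      (((C.filter fun c => ¬ ((triThrough G A B c : ℝ) ≤
          (triCount G A B C : ℝ) / ((A.card : ℝ) * B.card * C.card) / 4
            * A.card * B.card))).card : ℝ) := by
  classical
  -- A and B are nonempty
  obtain ⟨p, hp⟩ : ((A ×ˢ B).filter fun p => G p.1 p.2).Nonempty := by
    rw [← Finset.card_pos]; exact he
  simp only [Finset.mem_filter, Finset.mem_product] at hp
  have hA : 0 < (A.card : ℝ) := by
    exact_mod_cast Finset.card_pos.2 ⟨p.1, hp.1.1⟩
  have hB : 0 < (B.card : ℝ) := by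
    exact_mod_cast Finset.card_pos.2 ⟨p.2, hp.1.2⟩
  rcases Nat.eq_zero_or_pos C.card with hC | hC
  · rw [hC]; push_cast; simp [mul_nonneg]
  have hn : 0 < (C.card : ℝ) := by exact_mod_cast hC
  set T : ℝ := (triCount G A B C : ℝ) with hT
  set E : ℝ := (bipE G A B : ℝ) with hE
  have hE1 : (1:ℝ) ≤ E := by rw [hE]; exact_mod_cast he
  set P : V → Prop := fun c => (triThrough G A B c : ℝ) ≤
      T / ((A.card : ℝ) * B.card * C.card) / 4 * A.card * B.card with hP
  -- lower bound on T
  have hTlb : τ * (C.card : ℝ) * E ≤ T := by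
    rw [hT, tri_edge_sum]
    push_cast
    calc τ * (C.card : ℝ) * E
        = ∑ _p ∈ (A ×ˢ B).filter (fun p => G p.1 p.2), τ * (C.card : ℝ) := by
          rw [Finset.sum_const, hE]; unfold bipE; push_cast; ring
      _ ≤ _ := by
          apply Finset.sum_le_sum
          intro q hq
          simp only [Finset.mem_filter, Finset.mem_product] at hq
          exact hext q.1 hq.1.1 q.2 hq.1.2 hq.2
  -- split T over light and heavy vertices
  have hsplit : T = (∑ c ∈ C.filter P, (triThrough G A B c : ℝ))
      + ∑ c ∈ C.filter (fun c => ¬ P c), (triThrough G A B c : ℝ) := by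
    conv_lhs => rw [hT, tri_sum, Nat.cast_sum]
    exact (Finset.sum_filter_add_sum_filter_not C P _).symm
  have hlight : (∑ c ∈ C.filter P, (triThrough G A B c : ℝ)) ≤ T / 4 := by
    have key : T / ((A.card : ℝ) * B.card * C.card) / 4 * A.card * B.card
        = T / (4 * C.card) := by
      rw [div_div, div_mul_eq_mul_div, div_mul_eq_mul_div,
        div_eq_div_iff (mul_pos (mul_pos (mul_pos hA hB) hn) four_pos).ne' (mul_pos four_pos hn).ne']
      ring
    calc (∑ c ∈ C.filter P, (triThrough G A B c : ℝ))
        ≤ ∑ _c ∈ C.filter P, T / (4 * C.card) := by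
          apply Finset.sum_le_sum
          intro c hc
          rw [← key]
          exact (Finset.mem_filter.1 hc).2
      _ = (C.filter P).card * (T / (4 * C.card)) := by rw [Finset.sum_const]; ring
      _ ≤ (C.card : ℝ) * (T / (4 * C.card)) := by
          apply mul_le_mul_of_nonneg_right
          · exact_mod_cast Finset.card_le_card (Finset.filter_subset _ _)
          · have hT0 : 0 ≤ T := by rw [hT]; positivity
            exact div_nonneg hT0 (mul_pos four_pos hn).le
      _ = T / 4 := by
          rw [mul_div_assoc', div_eq_div_iff (mul_pos four_pos hn).ne' four_pos.ne']
          ring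
  have hheavy : (∑ c ∈ C.filter (fun c => ¬ P c), (triThrough G A B c : ℝ))
      ≤ ((C.filter (fun c => ¬ P c)).card : ℝ) * E := by
    calc _ ≤ ∑ _c ∈ C.filter (fun c => ¬ P c), E := by
          apply Finset.sum_le_sum
          intro c _
          rw [hE]
          exact_mod_cast triThrough_le_bipE G A B c
      _ = _ := by rw [Finset.sum_const]; ring
  set H : ℝ := ((C.filter (fun c => ¬ P c)).card : ℝ) with hH
  have h1 : τ * (C.card : ℝ) * E ≤ T / 4 + H * E := by
    calc τ * (C.card : ℝ) * E ≤ T := hTlb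
      _ = _ := hsplit
      _ ≤ T / 4 + H * E := by gcongr
  have h2 : (3:ℝ)/4 * (τ * C.card * E) ≤ H * E := by nlinarith
  have h3 : (3 * τ / 4) * (C.card : ℝ) * E ≤ H * E := by nlinarith
  exact le_of_mul_le_mul_right h3 (lt_of_lt_of_le one_pos hE1)
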